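/- Let v ∈ (0, π) and a ∈ ℝ, a ≠ 0, satisfy a²·cos(v) + a·sin(v) ≥ 0. Then 2a²·cos(v) + a·(2·sin(v) − v·cos(v)) ≥ 0. -/

import Mathlib

theorem easier_quadratic (v a : ℝ) (hv : v ∈ Set.Ioo 0 Real.pi) (ha : a ≠ 0)
    (hadm : a ^ 2 * Real.cos v + a * Real.sin v ≥ 0) :
    2 * a ^ 2 * Real.cos v + a * (2 * Real.sin v - v * Real.cos v) ≥ 0 := by
  obtain ⟨hv0, hvπ⟩ := hv
  have hsin : 0 < Real.sin v := Real.sin_pos_of_pos_of_lt_pi hv0 hvπ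
  rcases le_or_gt (Real.cos v) 0 with hc | hc
  · -- cos v ≤ 0 : a must be positive
    have hapos : 0 < a := by
      rcases ha.lt_or_gt with h | h
      · exfalso
        nlinarith [mul_nonpos_of_nonpos_of_nonneg (le_of_lt h) hsin.le,
          mul_nonneg (sq_nonneg a) (neg_nonneg.mpr hc)]
      · exact h
    nlinarith [mul_nonneg (mul_nonneg hapos.le hv0.le) (neg_nonneg.mpr hc)]
  · -- cos v > 0, so v < π/2 and v cos v < sin v
    have hv2 : v < Real.pi / 2 := by
      by_contra h
      push_neg at h
      have := Real.cos_nonpos_of_pi_div_two_le_of_le h (by linarith [Real.pi_pos])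
      linarith
    have htan : v < Real.tan v := Real.lt_tan hv0 hv2
    have hvc : v * Real.cos v < Real.sin v := by
      have := (mul_lt_mul_iff_of_pos_right hc).mpr htan
      rwa [Real.tan_eq_sin_div_cos, div_mul_cancel₀ _ (ne_of_gt hc)] at this
    rcases ha.lt_or_gt with h | h
    · -- a < 0 : a ≤ -tan v side
      have hle : a * Real.cos v + Real.sin v ≤ 0 := by nlinarith
      nlinarith [mul_nonneg (neg_nonneg.mpr h.le) (neg_nonneg.mpr hle),
        mul_pos (neg_pos.mpr h) hv0]
    · nlinarith [mul_pos h hsin, mul_nonneg (sq_nonneg a) hc.le,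
        mul_pos h (sub_pos.mpr hvc)]
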